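/- Let I be a homogeneous ideal in ℂ[x_1,…,x_N] and suppose that for some integers d and q with q < d one has dim_ℂ I_d ≥ C(N+d−q−1, d−q) (the dimension of the full space of homogeneous polynomials of degree d−q in N variables). Then for every τ ≥ 0, dim_ℂ I_{d+τ} ≥ C(N+τ+d−q−1, τ+d−q). -/

import Mathlib

open Finset

namespace MacAux

/-- number of monomials of degree `e` in `n` variables -/
def M (n e : ℕ) : ℕ := (n + e - 1).choose e

lemma M_zero_right (n : ℕ) : M n 0 = 1 := by simp [M]

lemma M_zero_left {e : ℕ} (he : 1 ≤ e) : M 0 e = 0 := by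
  have : 0 + e - 1 < e := by omega
  exact Nat.choose_eq_zero_of_lt this

lemma M_one_right (n : ℕ) : M n 1 = n := by simp [M]

lemma M_pos {n : ℕ} (e : ℕ) (hn : 0 < n) : 0 < M n e := Nat.choose_pos (by omega)

lemma M_pascal (n k : ℕ) : M (n+1) (k+1) = M (n+1) k + M n (k+1) := by
  simp only [M]
  have h1 : n + 1 + (k+1) - 1 = (n + k) + 1 := by omega
  have h2 : n + 1 + k - 1 = n + k := by omega
  have h3 : n + (k+1) - 1 = n + k := by omega
  rw [h1, h2, h3, Nat.choose_succ_succ]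

lemma M_hockey (n k : ℕ) : ∑ e ∈ range (k+1), M n e = M (n+1) k := by
  induction k with
  | zero => simp [M]
  | succ k ih => rw [Finset.sum_range_succ, ih, M_pascal]

def level (n e : ℕ) : Finset (Multiset ℕ) :=
  ((Finset.range n).sym e).image (fun s => (s : Sym ℕ e).toMultiset)

lemma mem_level {n e : ℕ} {m : Multiset ℕ} :
    m ∈ level n e ↔ Multiset.card m = e ∧ ∀ x ∈ m, x < n := by
  simp only [level, mem_image]
  constructor
  · rintro ⟨s, hs, rfl⟩
    refine ⟨s.2, fun x hx => ?_⟩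
    have := Finset.mem_sym_iff.1 hs x hx
    simpa using this
  · rintro ⟨hc, hb⟩
    refine ⟨⟨m, hc⟩, Finset.mem_sym_iff.2 fun a ha => ?_, rfl⟩
    simpa using hb a ha

def shadow (n : ℕ) (B : Finset (Multiset ℕ)) : Finset (Multiset ℕ) :=
  B.biUnion (fun m => (Finset.range n).image (fun i => i ::ₘ m))

lemma mem_shadow {n : ℕ} {B : Finset (Multiset ℕ)} {c : Multiset ℕ} :
    c ∈ shadow n B ↔ ∃ m ∈ B, ∃ i < n, c = i ::ₘ m := by
  simp only [shadow, mem_biUnion, mem_image, mem_range]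
  constructor
  · rintro ⟨m, hm, i, hi, rfl⟩; exact ⟨m, hm, i, hi, rfl⟩
  · rintro ⟨m, hm, i, hi, rfl⟩; exact ⟨m, hm, i, hi, rfl⟩

lemma cons_mem_shadow {n : ℕ} {B : Finset (Multiset ℕ)} {m : Multiset ℕ} {i : ℕ}
    (hm : m ∈ B) (hi : i < n) : i ::ₘ m ∈ shadow n B :=
  mem_shadow.2 ⟨m, hm, i, hi, rfl⟩

lemma shadow_level {n e : ℕ} {B : Finset (Multiset ℕ)} (hB : ∀ m ∈ B, m ∈ level n e) :
    ∀ c ∈ shadow n B, c ∈ level n (e+1) := by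
  intro c hc
  obtain ⟨m, hm, i, hi, rfl⟩ := mem_shadow.1 hc
  obtain ⟨h1, h2⟩ := mem_level.1 (hB m hm)
  refine mem_level.2 ⟨by simp [h1], fun x hx => ?_⟩
  rcases Multiset.mem_cons.1 hx with rfl | hx
  · exact hi
  · exact h2 x hx

lemma filter_ne_add_replicate (m : Multiset ℕ) (x : ℕ) :
    m.filter (fun y => y ≠ x) + Multiset.replicate (m.count x) x = m := by
  ext a
  rw [Multiset.count_add, Multiset.count_filter, Multiset.count_replicate]
  by_cases h : a = x
  · subst h
    rw [if_neg (by simp), if_pos rfl, zero_add]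
  · rw [if_pos h, if_neg (fun hh => h hh.symm), add_zero]

def slice (n : ℕ) (B : Finset (Multiset ℕ)) (j : ℕ) : Finset (Multiset ℕ) :=
  (B.filter (fun m => m.count n = j)).image (fun m => m.filter (fun y => y ≠ n))

lemma mem_slice {n j : ℕ} {B : Finset (Multiset ℕ)} {c : Multiset ℕ} :
    c ∈ slice n B j ↔ n ∉ c ∧ c + Multiset.replicate j n ∈ B := by
  simp only [slice, mem_image, mem_filter]
  constructor
  · rintro ⟨m, ⟨hmB, hcount⟩, rfl⟩
    refine ⟨by simp, ?_⟩
    rw [← hcount, filter_ne_add_replicate]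
    exact hmB
  · rintro ⟨hn, hmem⟩
    refine ⟨c + Multiset.replicate j n, ⟨hmem, ?_⟩, ?_⟩
    · rw [Multiset.count_add, Multiset.count_replicate_self,
        Multiset.count_eq_zero.2 hn, zero_add]
    · rw [Multiset.filter_add]
      have h1 : Multiset.filter (fun y => y ≠ n) c = c :=
        Multiset.filter_eq_self.2 fun a ha => by rintro rfl; exact hn ha
      have h2 : Multiset.filter (fun y => y ≠ n) (Multiset.replicate j n) = 0 := by
        rw [Multiset.filter_eq_nil]
        intro a ha h
        exact h (Multiset.eq_of_mem_replicate ha)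
      rw [h1, h2, add_zero]

lemma card_slice (n j : ℕ) (B : Finset (Multiset ℕ)) :
    (slice n B j).card = (B.filter (fun m => m.count n = j)).card := by
  apply Finset.card_image_of_injOn
  intro m1 h1 m2 h2 he
  rw [mem_coe, mem_filter] at h1 h2
  have he' : Multiset.filter (fun y => y ≠ n) m1 = Multiset.filter (fun y => y ≠ n) m2 := he
  have e1 := filter_ne_add_replicate m1 n
  have e2 := filter_ne_add_replicate m2 n
  rw [h1.2] at e1
  rw [h2.2] at e2
  rw [← e1, ← e2, he']

lemma sum_card_slice {n d : ℕ} {B : Finset (Multiset ℕ)}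
    (hB : ∀ m ∈ B, m ∈ level (n+1) d) :
    ∑ j ∈ range (d+1), (slice n B j).card = B.card := by
  simp only [card_slice]
  rw [← Finset.card_eq_sum_card_fiberwise]
  intro m hm
  rw [mem_coe, mem_range]
  have h1 : Multiset.card m = d := (mem_level.1 (hB m hm)).1
  have := Multiset.count_le_card n m
  omega

lemma slice_level {n d j : ℕ} {B : Finset (Multiset ℕ)}
    (hB : ∀ m ∈ B, m ∈ level (n+1) d) :
    ∀ c ∈ slice n B j, c ∈ level n (d - j) := by
  intro c hc
  obtain ⟨hn, hmem⟩ := mem_slice.1 hc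
  obtain ⟨hcard, hbdd⟩ := mem_level.1 (hB _ hmem)
  rw [Multiset.card_add, Multiset.card_replicate] at hcard
  refine mem_level.2 ⟨by omega, fun x hx => ?_⟩
  have hlt : x < n + 1 := hbdd x (Multiset.mem_add.2 (Or.inl hx))
  have : x ≠ n := fun h => hn (h ▸ hx)
  omega

def IsBorel (B : Finset (Multiset ℕ)) : Prop :=
  ∀ m ∈ B, ∀ j ∈ m, ∀ i < j, i ::ₘ m.erase j ∈ B

lemma erase_add_replicate (c : Multiset ℕ) (n j : ℕ) (hn : n ∉ c) :
    (c + Multiset.replicate (j+1) n).erase n = c + Multiset.replicate j n := by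
  ext a
  by_cases h : a = n
  · subst h
    rw [Multiset.count_erase_self]
    simp [Multiset.count_add, Multiset.count_replicate_self,
      Multiset.count_eq_zero.2 hn]
  · rw [Multiset.count_erase_of_ne h]
    simp [Multiset.count_add, Multiset.count_replicate, h]

lemma slice_borel {n d j : ℕ} {B : Finset (Multiset ℕ)}
    (hB : ∀ m ∈ B, m ∈ level (n+1) d) (hBor : IsBorel B) : IsBorel (slice n B j) := by
  intro c hc j' hj' i hi
  obtain ⟨hn, hmem⟩ := mem_slice.1 hc
  have hj'n : j' ≠ n := fun h => hn (h ▸ hj')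
  have hj'mem : j' ∈ c + Multiset.replicate j n := Multiset.mem_add.2 (Or.inl hj')
  have := hBor _ hmem j' hj'mem i hi
  have herase : (c + Multiset.replicate j n).erase j' = c.erase j' + Multiset.replicate j n := by
    ext a
    by_cases h : a = j'
    · subst h
      have hrep : Multiset.count a (Multiset.replicate j n) = 0 := by
        rw [Multiset.count_replicate, if_neg (fun hh => hj'n hh.symm)]
      have hpos : 1 ≤ Multiset.count a c := Multiset.count_pos.2 hj'
      rw [Multiset.count_erase_self, Multiset.count_add, Multiset.count_add,
        Multiset.count_erase_self, hrep]
      omega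
    · rw [Multiset.count_erase_of_ne h]
      simp only [Multiset.count_add]
      rw [Multiset.count_erase_of_ne h]
  rw [herase, ← Multiset.cons_add] at this
  refine mem_slice.2 ⟨?_, this⟩
  -- n ∉ i ::ₘ c.erase j'
  have hj'lt : j' < n := by
    have := (mem_level.1 (hB _ hmem)).2 j' hj'mem
    omega
  intro hmem'
  rcases Multiset.mem_cons.1 hmem' with h | h
  · omega
  · exact hn (Multiset.mem_of_mem_erase h)

lemma shadow_slice_subset {n d j : ℕ} {B : Finset (Multiset ℕ)}
    (hB : ∀ m ∈ B, m ∈ level (n+1) d) (hBor : IsBorel B) :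
    ∀ c ∈ slice n B (j+1), ∀ i < n, i ::ₘ c ∈ slice n B j := by
  intro c hc i hi
  obtain ⟨hn, hmem⟩ := mem_slice.1 hc
  have hnmem : n ∈ c + Multiset.replicate (j+1) n :=
    Multiset.mem_add.2 (Or.inr (Multiset.mem_replicate.2 ⟨by omega, rfl⟩))
  have := hBor _ hmem n hnmem i hi
  rw [erase_add_replicate c n j hn, ← Multiset.cons_add] at this
  refine mem_slice.2 ⟨?_, this⟩
  intro hmem'
  rcases Multiset.mem_cons.1 hmem' with h | h
  · omega
  · exact hn h


lemma slice_shadow_into {n d j : ℕ} {B : Finset (Multiset ℕ)} :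
    slice n B j ⊆ slice n (shadow (n+1) B) (j+1) := by
  intro c hc
  obtain ⟨hn, hmem⟩ := mem_slice.1 hc
  refine mem_slice.2 ⟨hn, ?_⟩
  have h1 : n ::ₘ (c + Multiset.replicate j n) ∈ shadow (n+1) B :=
    cons_mem_shadow hmem (by omega)
  have h2 : c + Multiset.replicate (j+1) n = n ::ₘ (c + Multiset.replicate j n) := by
    rw [Multiset.replicate_succ, Multiset.add_cons]
  rw [h2]
  exact h1

lemma shadow_slice0_into {n d : ℕ} {B : Finset (Multiset ℕ)} :
    shadow n (slice n B 0) ⊆ slice n (shadow (n+1) B) 0 := by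
  intro c' hc'
  obtain ⟨c, hc, i, hi, rfl⟩ := mem_shadow.1 hc'
  obtain ⟨hn, hmem⟩ := mem_slice.1 hc
  rw [Multiset.replicate_zero, add_zero] at hmem
  refine mem_slice.2 ⟨?_, ?_⟩
  · intro h
    rcases Multiset.mem_cons.1 h with h | h
    · omega
    · exact hn h
  · rw [Multiset.replicate_zero, add_zero]
    exact cons_mem_shadow hmem (by omega)

lemma shadow_card_lower {n d : ℕ} {B : Finset (Multiset ℕ)}
    (hlev : ∀ m ∈ B, m ∈ level (n+1) d) :
    B.card + (shadow n (slice n B 0)).card ≤ (shadow (n+1) B).card := by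
  have hshlev : ∀ c ∈ shadow (n+1) B, c ∈ level (n+1) (d+1) := shadow_level hlev
  have hsum : ∑ j ∈ range (d+1+1), (slice n (shadow (n+1) B) j).card
      = (shadow (n+1) B).card := sum_card_slice hshlev
  rw [← hsum, Finset.sum_range_succ']
  have h1 : B.card ≤ ∑ j ∈ range (d+1), (slice n (shadow (n+1) B) (j+1)).card := by
    rw [← sum_card_slice hlev]
    exact Finset.sum_le_sum fun j _ =>
      Finset.card_le_card (slice_shadow_into (d := d))
  have h2 : (shadow n (slice n B 0)).card ≤ (slice n (shadow (n+1) B) 0).card :=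
    Finset.card_le_card (shadow_slice0_into (d := d))
  omega

theorem borel_main (n : ℕ) : ∀ d q : ℕ, q < d → ∀ B : Finset (Multiset ℕ),
    (∀ m ∈ B, m ∈ level n d) → IsBorel B → M n (d-q) ≤ B.card →
    M n (d-q+1) ≤ (shadow n B).card := by
  induction n with
  | zero =>
    intro d q hq B hlev _ _
    have : M 0 (d-q+1) = 0 := M_zero_left (by omega)
    omega
  | succ n IH =>
    intro d q hq B hlev hBor hcard
    by_cases h0 : M n (d-q) ≤ (slice n B 0).card
    · -- main case
      have hB0lev : ∀ m ∈ slice n B 0, m ∈ level n d := by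
        intro m hm
        have := slice_level hlev m hm
        rwa [Nat.sub_zero] at this
      have hsh := IH d q hq _ hB0lev (slice_borel hlev hBor) h0
      have hlow := shadow_card_lower hlev
      have hp := M_pascal n (d - q)
      omega
    · -- contradiction case
      exfalso
      have hM1 : 1 ≤ M n (d - q) := by omega
      have hn : 0 < n := by
        by_contra hn
        have : n = 0 := by omega
        subst this
        rw [M_zero_left (by omega)] at hM1
        omega
      -- descent chain
      have chain : ∀ j : ℕ, j + 1 ≤ d - q →
          M n (d-q-(j+1)) ≤ (slice n B (j+1)).card →
          M n (d-q-j) ≤ (slice n B j).card := by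
        intro j hj hcard'
        have hsub : shadow n (slice n B (j+1)) ⊆ slice n B j := by
          intro c' hc'
          obtain ⟨c, hc, i, hi, rfl⟩ := mem_shadow.1 hc'
          exact shadow_slice_subset hlev hBor c hc i hi
        by_cases hlt : j + 1 < d - q
        · have hB'lev : ∀ m ∈ slice n B (j+1), m ∈ level n (d - (j+1)) :=
            slice_level hlev
          have hq' : q < d - (j+1) := by omega
          have hcard'' : M n ((d - (j+1)) - q) ≤ (slice n B (j+1)).card := by
            have : (d - (j+1)) - q = d - q - (j+1) := by omega
            rw [this]; exact hcard'
          have := IH (d - (j+1)) q hq' _ hB'lev (slice_borel hlev hBor) hcard''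
          have hidx : (d - (j+1)) - q + 1 = d - q - j := by omega
          rw [hidx] at this
          exact le_trans this (Finset.card_le_card hsub)
        · -- j + 1 = d - q
          have hj1 : j + 1 = d - q := by omega
          have hne : (slice n B (j+1)).Nonempty := by
            rw [← Finset.card_pos]
            have : M n (d - q - (j+1)) = 1 := by
              rw [show d - q - (j+1) = 0 by omega, M_zero_right]
            omega
          obtain ⟨c, hc⟩ := hne
          have hsub2 : (range n).image (fun i => i ::ₘ c) ⊆ slice n B j := by
            intro c' hc'
            obtain ⟨i, hi, rfl⟩ := Finset.mem_image.1 hc'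
            exact shadow_slice_subset hlev hBor c hc i (mem_range.1 hi)
          have hcardim : ((range n).image (fun i => i ::ₘ c)).card = n := by
            rw [Finset.card_image_of_injective _ fun a b hab =>
              (Multiset.cons_inj_left c).1 hab, Finset.card_range]
          have hle : n ≤ (slice n B j).card := by
            have h := Finset.card_le_card hsub2
            rwa [hcardim] at h
          have : M n (d - q - j) = n := by
            rw [show d - q - j = 1 by omega, M_one_right]
          omega
      have hfail : ∀ j, j ≤ d - q → ¬ (M n (d-q-j) ≤ (slice n B j).card) := by
        intro j
        induction j with
        | zero => intro _ h; exact h0 (by simpa using h)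
        | succ j ihj =>
          intro hj hP
          exact ihj (by omega) (chain j hj hP)
      have hempty : ∀ k, slice n B (d - q + k) = ∅ := by
        intro k
        induction k with
        | zero =>
          have hth := hfail (d - q) le_rfl
          rw [show d - q - (d - q) = 0 by omega, M_zero_right] at hth
          have hc0 : (slice n B (d - q)).card = 0 := by omega
          simpa using Finset.card_eq_zero.1 hc0
        | succ k ihk =>
          show slice n B ((d - q + k) + 1) = ∅
          rw [Finset.eq_empty_iff_forall_notMem]
          intro c hc
          have h2 := shadow_slice_subset hlev hBor c hc 0 hn
          rw [ihk] at h2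
          exact Finset.notMem_empty _ h2
      -- sum up
      set k := d - q with hk
      have hbound : ∀ j ∈ range (d+1), (slice n B j).card ≤ if j < k then M n (k - j) - 1 else 0 := by
        intro j hj
        by_cases hjk : j < k
        · rw [if_pos hjk]
          have := hfail j (by omega)
          omega
        · rw [if_neg hjk]
          have : slice n B j = ∅ := by
            have := hempty (j - k)
            rwa [show k + (j - k) = j by omega] at this
          rw [this]
          simp
      have htot : B.card ≤ ∑ j ∈ range (d+1), (if j < k then M n (k - j) - 1 else 0) := by
        rw [← sum_card_slice hlev]
        exact Finset.sum_le_sum hbound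
      have hsumif : ∑ j ∈ range (d+1), (if j < k then M n (k - j) - 1 else 0)
          = ∑ j ∈ range k, (M n (k - j) - 1) := by
        rw [← Finset.sum_subset (Finset.range_subset_range.2 (by omega : k ≤ d + 1))]
        · exact Finset.sum_congr rfl fun j hj => if_pos (mem_range.1 hj)
        · intro j _ hj
          rw [if_neg (by simpa using hj)]
      have hre : ∑ j ∈ range k, (M n (k - j) - 1) = ∑ e ∈ range k, (M n (e + 1) - 1) := by
        rw [← Finset.sum_range_reflect (fun e => M n (e + 1) - 1) k]
        exact Finset.sum_congr rfl fun j hj => by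
          have := mem_range.1 hj
          congr 2
          omega
      have hplus : ∑ e ∈ range k, (M n (e + 1) - 1) + k = ∑ e ∈ range k, M n (e + 1) := by
        have hpt : ∀ e ∈ range k, M n (e+1) = (M n (e+1) - 1) + 1 := fun e _ => by
          have := M_pos (n := n) (e+1) hn; omega
        calc ∑ e ∈ range k, (M n (e+1) - 1) + k
            = ∑ e ∈ range k, ((M n (e+1) - 1) + 1) := by
              rw [Finset.sum_add_distrib, Finset.sum_const, card_range, smul_eq_mul, mul_one]
          _ = ∑ e ∈ range k, M n (e+1) := Finset.sum_congr rfl fun e he => (hpt e he).symm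
      have hHS : ∑ e ∈ range k, M n (e+1) + 1 = M (n+1) k := by
        have hh := M_hockey n k
        rw [Finset.sum_range_succ'] at hh
        rw [M_zero_right] at hh
        exact hh
      have hk1 : 1 ≤ k := by omega
      omega


/-! ### Compression -/

lemma sum_range_card_le_aux : ∀ (t : ℕ) (S : Finset ℕ), S.card = t →
    ((∑ b ∈ range t, b) ≤ ∑ b ∈ S, b) ∧
      (S ≠ range t → (∑ b ∈ range t, b) < ∑ b ∈ S, b) := by
  intro t
  induction t with
  | zero =>
    intro S hn
    have hS : S = ∅ := Finset.card_eq_zero.1 hn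
    subst hS
    simp
  | succ t IH =>
    intro S hn
    have hne : S.Nonempty := by
      rw [← Finset.card_pos, hn]; omega
    have hmem := S.max'_mem hne
    set x := S.max' hne with hxdef
    have hx : ∀ y ∈ S, y ≤ x := fun y hy => S.le_max' y hy
    have hS' : (S.erase x).card = t := by
      rw [Finset.card_erase_of_mem hmem, hn]
      omega
    have hxt : t ≤ x := by
      have hsub : S ⊆ range (x+1) := fun y hy => mem_range.2 (by have := hx y hy; omega)
      have := Finset.card_le_card hsub
      rw [hn, Finset.card_range] at this
      omega
    have hsum : (∑ b ∈ S.erase x, b) + x = ∑ b ∈ S, b := Finset.sum_erase_add S _ hmem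
    obtain ⟨ha, hb⟩ := IH (S.erase x) hS'
    have hrs : ∑ b ∈ range (t+1), b = (∑ b ∈ range t, b) + t := Finset.sum_range_succ _ t
    constructor
    · omega
    · intro hneq
      by_cases hcase : S.erase x = range t
      · have hxx : x ≠ t := by
          intro h
          apply hneq
          have h1 : S = insert x (S.erase x) := (Finset.insert_erase hmem).symm
          rw [h1, hcase, h, Finset.range_add_one]
        have hlt : t < x := by omega
        have heq : (∑ b ∈ S.erase x, b) = ∑ b ∈ range t, b := by rw [hcase]
        omega
      · have := hb hcase
        omega

lemma sum_range_card_le (S : Finset ℕ) :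
    ((∑ b ∈ range S.card, b) ≤ ∑ b ∈ S, b) ∧
      (S ≠ range S.card → (∑ b ∈ range S.card, b) < ∑ b ∈ S, b) :=
  sum_range_card_le_aux S.card S rfl

section Compression

variable (i j : ℕ)

/-- the part of `m` not involving `i`, `j` -/
def rst (m : Multiset ℕ) : Multiset ℕ := m.filter (fun x => ¬(x = i ∨ x = j))

/-- total degree in `i`, `j` -/
def tot (m : Multiset ℕ) : ℕ := m.count i + m.count j

/-- a monomial with given rest `r`, `i`+`j`-degree `s`, and `j`-degree `b` -/
def build (r : Multiset ℕ) (s b : ℕ) : Multiset ℕ :=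
  r + Multiset.replicate (s - b) i + Multiset.replicate b j

variable {i j}

lemma count_build (x : ℕ) (r : Multiset ℕ) (s b : ℕ) :
    (build i j r s b).count x
      = r.count x + (if i = x then s - b else 0) + (if j = x then b else 0) := by
  simp [build, Multiset.count_replicate]

lemma count_rst_i (hij : i ≠ j) (m : Multiset ℕ) : (rst i j m).count i = 0 := by
  rw [Multiset.count_eq_zero]
  intro h
  have := Multiset.of_mem_filter h
  simp at this

lemma count_rst_j (hij : i ≠ j) (m : Multiset ℕ) : (rst i j m).count j = 0 := by
  rw [Multiset.count_eq_zero]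
  intro h
  have := Multiset.of_mem_filter h
  simp at this

lemma count_rst_other {x : ℕ} (hxi : x ≠ i) (hxj : x ≠ j) (m : Multiset ℕ) :
    (rst i j m).count x = m.count x := by
  rw [rst, Multiset.count_filter, if_pos]
  simp [hxi, hxj]

lemma build_self (hij : i ≠ j) (m : Multiset ℕ) :
    build i j (rst i j m) (tot i j m) (m.count j) = m := by
  have hb : m.count j ≤ tot i j m := by simp [tot]
  ext x
  rw [count_build]
  by_cases hxi : x = i
  · subst hxi
    rw [count_rst_i hij, if_pos rfl, if_neg (fun h => hij h.symm)]
    simp [tot]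
  · by_cases hxj : x = j
    · subst hxj
      rw [count_rst_j hij, if_neg (fun h => hij h), if_pos rfl]
      simp
    · rw [count_rst_other hxi hxj, if_neg (fun h => hxi h.symm), if_neg (fun h => hxj h.symm)]
      simp

lemma rst_build (hij : i ≠ j) {r : Multiset ℕ} (hr : ∀ x ∈ r, ¬(x = i ∨ x = j)) (s b : ℕ) :
    rst i j (build i j r s b) = r := by
  rw [build, rst, Multiset.filter_add, Multiset.filter_add, Multiset.filter_eq_self.2 hr]
  have h1 : Multiset.filter (fun x => ¬(x = i ∨ x = j)) (Multiset.replicate (s-b) i) = 0 := by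
    rw [Multiset.filter_eq_nil]
    intro a ha
    rw [Multiset.eq_of_mem_replicate ha]
    simp
  have h2 : Multiset.filter (fun x => ¬(x = i ∨ x = j)) (Multiset.replicate b j) = 0 := by
    rw [Multiset.filter_eq_nil]
    intro a ha
    rw [Multiset.eq_of_mem_replicate ha]
    simp
  rw [h1, h2, add_zero, add_zero]

lemma tot_build (hij : i ≠ j) {r : Multiset ℕ} (hr : ∀ x ∈ r, ¬(x = i ∨ x = j))
    {s b : ℕ} (hb : b ≤ s) : tot i j (build i j r s b) = s := by
  have hri : r.count i = 0 := Multiset.count_eq_zero.2 (fun h => hr i h (by simp))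
  have hrj : r.count j = 0 := Multiset.count_eq_zero.2 (fun h => hr j h (by simp))
  rw [tot, count_build, count_build, hri, hrj, if_pos rfl, if_pos rfl,
    if_neg (fun h => hij h), if_neg (fun h => hij h.symm)]
  omega

lemma count_j_build (hij : i ≠ j) {r : Multiset ℕ} (hr : ∀ x ∈ r, ¬(x = i ∨ x = j)) (s b : ℕ) :
    (build i j r s b).count j = b := by
  have hrj : r.count j = 0 := Multiset.count_eq_zero.2 (fun h => hr j h (by simp))
  rw [count_build, hrj, if_neg (fun h => hij h), if_pos rfl]
  omega

lemma rst_pred (m : Multiset ℕ) : ∀ x ∈ rst i j m, ¬(x = i ∨ x = j) := by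
  intro x hx
  rw [rst, Multiset.mem_filter] at hx
  exact hx.2

variable (i j)

/-- `j`-degrees of the elements of `X` in the fiber `(r, s)` -/
def fib (X : Finset (Multiset ℕ)) (r : Multiset ℕ) (s : ℕ) : Finset ℕ :=
  (X.filter (fun w => rst i j w = r ∧ tot i j w = s)).image (fun w => w.count j)

/-- compression of the fiber `(r, s)` of `X` -/
def cmpFib (X : Finset (Multiset ℕ)) (r : Multiset ℕ) (s : ℕ) : Finset (Multiset ℕ) :=
  (range (fib i j X r s).card).image (fun b => build i j r s b)

/-- full `(i,j)`-compression of `X` -/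
def cmp (X : Finset (Multiset ℕ)) : Finset (Multiset ℕ) :=
  X.biUnion (fun m => cmpFib i j X (rst i j m) (tot i j m))

variable {i j}

lemma mem_fib {X : Finset (Multiset ℕ)} {r : Multiset ℕ} {s b : ℕ} :
    b ∈ fib i j X r s ↔ ∃ w ∈ X, rst i j w = r ∧ tot i j w = s ∧ w.count j = b := by
  simp only [fib, Finset.mem_image, Finset.mem_filter]
  constructor
  · rintro ⟨w, ⟨hw, h1, h2⟩, rfl⟩; exact ⟨w, hw, h1, h2, rfl⟩
  · rintro ⟨w, hw, h1, h2, rfl⟩; exact ⟨w, ⟨hw, h1, h2⟩, rfl⟩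

lemma card_fib_le {X : Finset (Multiset ℕ)} {r : Multiset ℕ} {s : ℕ} :
    (fib i j X r s).card ≤ s + 1 := by
  have hsub : fib i j X r s ⊆ range (s+1) := by
    intro b hb
    obtain ⟨w, _, _, h2, rfl⟩ := mem_fib.1 hb
    rw [mem_range]
    have : w.count j ≤ tot i j w := by simp [tot]
    omega
  have := Finset.card_le_card hsub
  rwa [Finset.card_range] at this

lemma card_fib (hij : i ≠ j) (X : Finset (Multiset ℕ)) (r : Multiset ℕ) (s : ℕ) :
    (fib i j X r s).card = (X.filter (fun w => rst i j w = r ∧ tot i j w = s)).card := by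
  apply Finset.card_image_of_injOn
  intro w1 h1 w2 h2 he
  rw [mem_coe, Finset.mem_filter] at h1 h2
  have e1 := build_self hij w1
  have e2 := build_self hij w2
  rw [h1.2.1, h1.2.2] at e1
  rw [h2.2.1, h2.2.2] at e2
  have he' : Multiset.count j w1 = Multiset.count j w2 := he
  rw [← e1, ← e2, he']

lemma card_cmpFib (hij : i ≠ j) (X : Finset (Multiset ℕ)) {r : Multiset ℕ}
    (hr : ∀ x ∈ r, ¬(x = i ∨ x = j)) (s : ℕ) :
    (cmpFib i j X r s).card = (fib i j X r s).card := by
  rw [cmpFib, Finset.card_image_of_injOn, Finset.card_range]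
  intro b1 _ b2 _ he
  have h1 := count_j_build hij hr s b1
  have h2 := count_j_build hij hr s b2
  have he' : build i j r s b1 = build i j r s b2 := he
  rw [← h1, ← h2, he']

lemma cmpFib_data (hij : i ≠ j) {X : Finset (Multiset ℕ)} {r : Multiset ℕ}
    (hr : ∀ x ∈ r, ¬(x = i ∨ x = j)) {s : ℕ} {c : Multiset ℕ}
    (hc : c ∈ cmpFib i j X r s) :
    rst i j c = r ∧ tot i j c = s ∧ c.count j < (fib i j X r s).card := by
  obtain ⟨b, hb, rfl⟩ := Finset.mem_image.1 hc
  rw [mem_range] at hb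
  have hbs : b ≤ s := by have := card_fib_le (X := X) (r := r) (s := s) (i := i) (j := j); omega
  exact ⟨rst_build hij hr s b, tot_build hij hr hbs, by rwa [count_j_build hij hr]⟩

lemma mem_cmp (hij : i ≠ j) {X : Finset (Multiset ℕ)} {c : Multiset ℕ} :
    c ∈ cmp i j X ↔ c.count j < (fib i j X (rst i j c) (tot i j c)).card := by
  constructor
  · intro hc
    obtain ⟨m, _, hc'⟩ := Finset.mem_biUnion.1 hc
    obtain ⟨h1, h2, h3⟩ := cmpFib_data hij (rst_pred m) hc'
    rw [h1, h2]
    exact h3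
  · intro h
    have hpos : 0 < (fib i j X (rst i j c) (tot i j c)).card := by omega
    rw [Finset.card_pos] at hpos
    obtain ⟨b, hb⟩ := hpos
    obtain ⟨w, hw, hw1, hw2, _⟩ := mem_fib.1 hb
    refine Finset.mem_biUnion.2 ⟨w, hw, ?_⟩
    rw [hw1, hw2]
    refine Finset.mem_image.2 ⟨c.count j, mem_range.2 h, ?_⟩
    exact build_self hij c

lemma cmp_eq_biUnion_keys (hij : i ≠ j) (X : Finset (Multiset ℕ)) :
    cmp i j X = (X.image (fun m => (rst i j m, tot i j m))).biUnion
      (fun k => cmpFib i j X k.1 k.2) := by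
  rw [cmp, Finset.image_biUnion]

lemma keys_disjoint (hij : i ≠ j) (X : Finset (Multiset ℕ)) :
    ∀ k1 ∈ X.image (fun m => (rst i j m, tot i j m)),
    ∀ k2 ∈ X.image (fun m => (rst i j m, tot i j m)),
      k1 ≠ k2 → Disjoint (cmpFib i j X k1.1 k1.2) (cmpFib i j X k2.1 k2.2) := by
  intro k1 hk1 k2 hk2 hne
  obtain ⟨m1, _, rfl⟩ := Finset.mem_image.1 hk1
  obtain ⟨m2, _, rfl⟩ := Finset.mem_image.1 hk2
  rw [Finset.disjoint_left]
  intro c hc1 hc2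
  obtain ⟨a1, b1, _⟩ := cmpFib_data hij (rst_pred m1) hc1
  obtain ⟨a2, b2, _⟩ := cmpFib_data hij (rst_pred m2) hc2
  apply hne
  rw [Prod.ext_iff]
  exact ⟨by rw [← a1, ← a2], by rw [← b1, ← b2]⟩

lemma card_cmp (hij : i ≠ j) (X : Finset (Multiset ℕ)) : (cmp i j X).card = X.card := by
  rw [cmp_eq_biUnion_keys hij, Finset.card_biUnion (keys_disjoint hij X)]
  rw [Finset.card_eq_sum_card_fiberwise
    (f := fun m => (rst i j m, tot i j m)) (t := X.image (fun m => (rst i j m, tot i j m)))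
    (fun m hm => Finset.mem_image_of_mem _ hm)]
  apply Finset.sum_congr rfl
  intro k hk
  obtain ⟨m, _, rfl⟩ := Finset.mem_image.1 hk
  rw [card_cmpFib hij X (rst_pred m), card_fib hij]
  congr 1
  apply Finset.filter_congr
  intro w _
  simp [Prod.ext_iff, eq_comm]

end Compression

section Compression2
variable {i j : ℕ}

/-! ### Weight and the compression step -/

lemma sum_build (hij : i ≤ j) (r : Multiset ℕ) {s b : ℕ} (hb : b ≤ s) :
    (build i j r s b).sum = r.sum + s * i + b * (j - i) := by
  rw [build, Multiset.sum_add, Multiset.sum_add, Multiset.sum_replicate, Multiset.sum_replicate,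
    smul_eq_mul, smul_eq_mul]
  have h1 : b * j = b * i + b * (j - i) := by
    rw [← Nat.mul_add]
    congr 1
    omega
  have h2 : (s - b) * i + b * i = s * i := by
    rw [← Nat.add_mul]
    congr 1
    omega
  omega

lemma card_build {r : Multiset ℕ} {s b : ℕ} (hb : b ≤ s) :
    Multiset.card (build i j r s b) = Multiset.card r + s := by
  rw [build, Multiset.card_add, Multiset.card_add, Multiset.card_replicate,
    Multiset.card_replicate]
  omega

lemma card_eq_rst_tot (hij : i ≠ j) (m : Multiset ℕ) :
    Multiset.card m = Multiset.card (rst i j m) + tot i j m := by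
  conv_lhs => rw [← build_self hij m]
  exact card_build (by simp [tot])

/-- total weight of a finite set of monomials -/
def wt (X : Finset (Multiset ℕ)) : ℕ := ∑ m ∈ X, m.sum

lemma keys_pairwise_disjoint (hij : i ≠ j) (X : Finset (Multiset ℕ)) :
    (↑(X.image (fun m => (rst i j m, tot i j m))) :
        Set (Multiset ℕ × ℕ)).PairwiseDisjoint (fun k => cmpFib i j X k.1 k.2) := by
  intro k1 hk1 k2 hk2 hne
  exact keys_disjoint hij X k1 (by exact_mod_cast hk1) k2 (by exact_mod_cast hk2) hne

lemma linsum (T : Finset ℕ) (c0 δ : ℕ) :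
    ∑ b ∈ T, (c0 + b * δ) = T.card * c0 + (∑ b ∈ T, b) * δ := by
  rw [Finset.sum_add_distrib, Finset.sum_const, smul_eq_mul, Finset.sum_mul]

lemma fiber_sum_eq (hij : i < j) (X : Finset (Multiset ℕ)) {r : Multiset ℕ} {s : ℕ}
    (hr : ∀ x ∈ r, ¬(x = i ∨ x = j)) :
    ∑ w ∈ X.filter (fun w => rst i j w = r ∧ tot i j w = s), w.sum
      = ∑ b ∈ fib i j X r s, (r.sum + s * i + b * (j - i)) := by
  rw [fib, Finset.sum_image]
  · apply Finset.sum_congr rfl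
    intro w hw
    obtain ⟨hwX, hw1, hw2⟩ := Finset.mem_filter.1 hw
    have hb : w.count j ≤ s := by
      rw [← hw2]; simp [tot]
    conv_lhs => rw [← build_self hij.ne w, hw1, hw2]
    rw [sum_build hij.le r hb]
  · intro w1 h1 w2 h2 he
    obtain ⟨_, h11, h12⟩ := Finset.mem_filter.1 h1
    obtain ⟨_, h21, h22⟩ := Finset.mem_filter.1 h2
    have e1 := build_self hij.ne w1
    have e2 := build_self hij.ne w2
    rw [h11, h12] at e1
    rw [h21, h22] at e2
    rw [← e1, ← e2, show Multiset.count j w1 = Multiset.count j w2 from he]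

lemma cmpFib_sum_eq (hij : i < j) (X : Finset (Multiset ℕ)) {r : Multiset ℕ} {s : ℕ}
    (hr : ∀ x ∈ r, ¬(x = i ∨ x = j)) :
    ∑ c ∈ cmpFib i j X r s, c.sum
      = ∑ b ∈ range (fib i j X r s).card, (r.sum + s * i + b * (j - i)) := by
  rw [cmpFib, Finset.sum_image]
  · apply Finset.sum_congr rfl
    intro b hb
    rw [mem_range] at hb
    have hbs : b ≤ s := by
      have := card_fib_le (i := i) (j := j) (X := X) (r := r) (s := s)
      omega
    rw [sum_build hij.le r hbs]
  · intro b1 _ b2 _ he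
    have h1 := count_j_build hij.ne hr s b1
    have h2 := count_j_build hij.ne hr s b2
    have he' : build i j r s b1 = build i j r s b2 := he
    rw [← h1, ← h2, he']

lemma cons_erase_eq_build (hij : i ≠ j) {m : Multiset ℕ} (hj : j ∈ m) :
    i ::ₘ m.erase j = build i j (rst i j m) (tot i j m) (m.count j - 1) := by
  have hcnt : 1 ≤ m.count j := Multiset.one_le_count_iff_mem.2 hj
  ext x
  rw [count_build]
  by_cases hxi : x = i
  · subst hxi
    rw [Multiset.count_cons_self, Multiset.count_erase_of_ne hij, count_rst_i hij,
      if_pos rfl, if_neg (fun h => hij h.symm)]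
    simp only [tot]
    omega
  · rw [Multiset.count_cons_of_ne hxi]
    by_cases hxj : x = j
    · subst hxj
      rw [Multiset.count_erase_self, count_rst_j hij, if_neg (fun h => hij h), if_pos rfl]
      omega
    · rw [Multiset.count_erase_of_ne hxj, count_rst_other hxi hxj,
        if_neg (fun h => hxi h.symm), if_neg (fun h => hxj h.symm)]
      omega

lemma wt_cmp_lt (hij : i < j) {X : Finset (Multiset ℕ)} {m : Multiset ℕ} (hm : m ∈ X)
    (hcnt : 1 ≤ m.count j)
    (hnot : build i j (rst i j m) (tot i j m) (m.count j - 1) ∉ X) :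
    wt (cmp i j X) < wt X := by
  classical
  set K := X.image (fun m => (rst i j m, tot i j m)) with hK
  have hwtX : wt X = ∑ k ∈ K, ∑ w ∈ X.filter
      (fun w => (rst i j w, tot i j w) = k), w.sum := by
    rw [wt, ← Finset.sum_fiberwise_of_maps_to (g := fun m => (rst i j m, tot i j m))
      (fun m hm => Finset.mem_image_of_mem _ hm)]
  have hwtC : wt (cmp i j X) = ∑ k ∈ K, ∑ c ∈ cmpFib i j X k.1 k.2, c.sum := by
    rw [wt, cmp_eq_biUnion_keys hij.ne, Finset.sum_biUnion (keys_pairwise_disjoint hij.ne X)]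
  rw [hwtX, hwtC]
  -- rewrite fibers
  have hfilter : ∀ k : Multiset ℕ × ℕ, X.filter (fun w => (rst i j w, tot i j w) = k)
      = X.filter (fun w => rst i j w = k.1 ∧ tot i j w = k.2) := by
    intro k
    apply Finset.filter_congr
    intro w _
    simp [Prod.ext_iff]
  apply Finset.sum_lt_sum
  · -- ≤ for each fiber
    intro k hk
    obtain ⟨m0, _, rfl⟩ := Finset.mem_image.1 hk
    rw [hfilter, fiber_sum_eq hij X (rst_pred m0), cmpFib_sum_eq hij X (rst_pred m0),
      linsum, linsum, Finset.card_range]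
    have := (sum_range_card_le (fib i j X (rst i j m0) (tot i j m0))).1
    exact Nat.add_le_add_left (mul_le_mul_left this _) _
  · -- strict for the fiber of m
    refine ⟨(rst i j m, tot i j m), Finset.mem_image_of_mem _ hm, ?_⟩
    rw [hfilter, fiber_sum_eq hij X (rst_pred m), cmpFib_sum_eq hij X (rst_pred m),
      linsum, linsum, Finset.card_range]
    set S := fib i j X (rst i j m) (tot i j m) with hS
    have hSne : S ≠ range S.card := by
      intro hSeq
      have hmemS : m.count j ∈ S := mem_fib.2 ⟨m, hm, rfl, rfl, rfl⟩
      have h1 : m.count j < S.card := by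
        rw [hSeq, mem_range] at hmemS
        exact hmemS
      have h2 : m.count j - 1 ∈ S := by
        rw [hSeq, mem_range]
        omega
      obtain ⟨w, hw, hw1, hw2, hw3⟩ := mem_fib.1 h2
      apply hnot
      have := build_self hij.ne w
      rw [hw1, hw2, hw3] at this
      rwa [this]
    have hstrict := (sum_range_card_le S).2 hSne
    exact Nat.add_lt_add_left (mul_lt_mul_of_pos_right hstrict (by omega)) _

lemma cmp_level (hij : i < j) {n d : ℕ} (hjn : j < n) {X : Finset (Multiset ℕ)}
    (hX : ∀ m ∈ X, m ∈ level n d) : ∀ c ∈ cmp i j X, c ∈ level n d := by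
  intro c hc
  rw [mem_cmp hij.ne] at hc
  have hpos : 0 < (fib i j X (rst i j c) (tot i j c)).card := by omega
  rw [Finset.card_pos] at hpos
  obtain ⟨b, hb⟩ := hpos
  obtain ⟨w, hw, hw1, hw2, _⟩ := mem_fib.1 hb
  obtain ⟨hwc, hwb⟩ := mem_level.1 (hX w hw)
  refine mem_level.2 ⟨?_, ?_⟩
  · rw [card_eq_rst_tot hij.ne c, ← hw1, ← hw2, ← card_eq_rst_tot hij.ne w]
    exact hwc
  · intro x hx
    conv at hx => rw [← build_self hij.ne c]
    rw [build] at hx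
    rcases Multiset.mem_add.1 hx with hx | hx
    · rcases Multiset.mem_add.1 hx with hx | hx
      · rw [← hw1] at hx
        have : x ∈ w := Multiset.mem_of_mem_filter hx
        exact hwb x this
      · rw [Multiset.eq_of_mem_replicate hx]; omega
    · rw [Multiset.eq_of_mem_replicate hx]; omega

lemma shadow_cmp_subset {n : ℕ} (hij : i < j) (hjn : j < n) (X : Finset (Multiset ℕ)) :
    shadow n (cmp i j X) ⊆ cmp i j (shadow n X) := by
  intro c' hc'
  obtain ⟨c, hc, k, hk, rfl⟩ := mem_shadow.1 hc'
  rw [mem_cmp hij.ne] at hc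
  rw [mem_cmp hij.ne]
  by_cases hki : k = i
  · subst hki
    have h1 : rst k j (k ::ₘ c) = rst k j c := by
      rw [rst, rst, Multiset.filter_cons_of_neg _ (by simp)]
    have h2 : tot k j (k ::ₘ c) = tot k j c + 1 := by
      simp only [tot, Multiset.count_cons_self, Multiset.count_cons_of_ne (hij.ne.symm)]
      omega
    have h3 : (k ::ₘ c).count j = c.count j := Multiset.count_cons_of_ne hij.ne.symm c
    rw [h1, h2, h3]
    have hsub : fib k j X (rst k j c) (tot k j c)
        ⊆ fib k j (shadow n X) (rst k j c) (tot k j c + 1) := by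
      intro b hb
      obtain ⟨w, hw, hw1, hw2, hw3⟩ := mem_fib.1 hb
      refine mem_fib.2 ⟨k ::ₘ w, cons_mem_shadow hw (by omega), ?_, ?_, ?_⟩
      · rw [rst, Multiset.filter_cons_of_neg _ (by simp), ← rst]
        exact hw1
      · simp only [tot, Multiset.count_cons_self, Multiset.count_cons_of_ne hij.ne.symm]
        simp only [tot] at hw2
        omega
      · rw [Multiset.count_cons_of_ne hij.ne.symm]
        exact hw3
    have := Finset.card_le_card hsub
    omega
  · by_cases hkj : k = j
    · subst hkj
      have h1 : rst i k (k ::ₘ c) = rst i k c := by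
        rw [rst, rst, Multiset.filter_cons_of_neg _ (by simp)]
      have h2 : tot i k (k ::ₘ c) = tot i k c + 1 := by
        simp only [tot, Multiset.count_cons_self, Multiset.count_cons_of_ne hij.ne]
        omega
      have h3 : (k ::ₘ c).count k = c.count k + 1 := by
        rw [Multiset.count_cons_self]
      rw [h1, h2, h3]
      set S := fib i k X (rst i k c) (tot i k c) with hSdef
      have hSne : S.Nonempty := by
        rw [← Finset.card_pos]; omega
      set x := S.max' hSne with hxdef
      have hxmem : x ∈ S := S.max'_mem hSne
      have hsub : insert (x+1) S ⊆ fib i k (shadow n X) (rst i k c) (tot i k c + 1) := by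
        intro b hb
        rcases Finset.mem_insert.1 hb with rfl | hb
        · obtain ⟨w, hw, hw1, hw2, hw3⟩ := mem_fib.1 hxmem
          refine mem_fib.2 ⟨k ::ₘ w, cons_mem_shadow hw hjn, ?_, ?_, ?_⟩
          · rw [rst, Multiset.filter_cons_of_neg _ (by simp), ← rst]
            exact hw1
          · simp only [tot, Multiset.count_cons_self, Multiset.count_cons_of_ne hij.ne]
            simp only [tot] at hw2
            omega
          · rw [Multiset.count_cons_self, hw3]
        · obtain ⟨w, hw, hw1, hw2, hw3⟩ := mem_fib.1 hb
          refine mem_fib.2 ⟨i ::ₘ w, cons_mem_shadow hw (by omega), ?_, ?_, ?_⟩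
          · rw [rst, Multiset.filter_cons_of_neg _ (by simp), ← rst]
            exact hw1
          · simp only [tot, Multiset.count_cons_self, Multiset.count_cons_of_ne hij.ne.symm]
            simp only [tot] at hw2
            omega
          · rw [Multiset.count_cons_of_ne hij.ne.symm]
            exact hw3
      have hcard := Finset.card_le_card hsub
      rw [Finset.card_insert_of_notMem (fun h => by
        have := S.le_max' _ h
        omega)] at hcard
      omega
    · have h1 : rst i j (k ::ₘ c) = k ::ₘ rst i j c := by
        rw [rst, rst, Multiset.filter_cons_of_pos _ (by simp [hki, hkj])]
      have h2 : tot i j (k ::ₘ c) = tot i j c := by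
        rw [tot, tot, Multiset.count_cons_of_ne (fun h => hki h.symm),
          Multiset.count_cons_of_ne (fun h => hkj h.symm)]
      have h3 : (k ::ₘ c).count j = c.count j :=
        Multiset.count_cons_of_ne (fun h => hkj h.symm) c
      rw [h1, h2, h3]
      have hsub : fib i j X (rst i j c) (tot i j c)
          ⊆ fib i j (shadow n X) (k ::ₘ rst i j c) (tot i j c) := by
        intro b hb
        obtain ⟨w, hw, hw1, hw2, hw3⟩ := mem_fib.1 hb
        refine mem_fib.2 ⟨k ::ₘ w, cons_mem_shadow hw hk, ?_, ?_, ?_⟩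
        · rw [rst, Multiset.filter_cons_of_pos _ (by simp [hki, hkj]), ← rst, hw1]
        · rw [tot, Multiset.count_cons_of_ne (fun h => hki h.symm),
            Multiset.count_cons_of_ne (fun h => hkj h.symm), ← tot]
          exact hw2
        · rw [Multiset.count_cons_of_ne (fun h => hkj h.symm)]
          exact hw3
      have := Finset.card_le_card hsub
      omega


theorem comb_main_aux : ∀ (F : ℕ) (n d q : ℕ), q < d → ∀ B : Finset (Multiset ℕ),
    (∀ m ∈ B, m ∈ level n d) → wt B ≤ F → M n (d-q) ≤ B.card →
    M n (d-q+1) ≤ (shadow n B).card := by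
  intro F
  induction F using Nat.strong_induction_on with
  | _ F IH =>
    intro n d q hq B hlev hwt hcard
    by_cases hBor : IsBorel B
    · exact borel_main n d q hq B hlev hBor hcard
    · rw [IsBorel] at hBor
      push_neg at hBor
      obtain ⟨m, hm, jj, hjj, ii, hii, hnot⟩ := hBor
      have hjn : jj < n := (mem_level.1 (hlev m hm)).2 jj hjj
      have hcnt : 1 ≤ m.count jj := by
        rw [Nat.one_le_iff_ne_zero, Ne, Multiset.count_eq_zero]
        simpa using hjj
      have hnot' : build ii jj (rst ii jj m) (tot ii jj m) (m.count jj - 1) ∉ B := by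
        rw [← cons_erase_eq_build hii.ne hjj]
        exact hnot
      have hlt := wt_cmp_lt hii hm hcnt hnot'
      have hC : (cmp ii jj B).card = B.card := card_cmp hii.ne B
      have hClev := cmp_level hii hjn hlev
      have hres := IH (wt (cmp ii jj B)) (by omega) n d q hq _ hClev le_rfl
        (by rw [hC]; exact hcard)
      have hsub := shadow_cmp_subset hii hjn B
      have hsc := Finset.card_le_card hsub
      have hce : (cmp ii jj (shadow n B)).card = (shadow n B).card := card_cmp hii.ne _
      omega

/-- Macaulay-type shadow bound at the principal threshold -/
theorem comb_main (n d q : ℕ) (hq : q < d) (B : Finset (Multiset ℕ))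
    (hlev : ∀ m ∈ B, m ∈ level n d) (hcard : M n (d-q) ≤ B.card) :
    M n (d-q+1) ≤ (shadow n B).card :=
  comb_main_aux (wt B) n d q hq B hlev le_rfl hcard

end Compression2

/-! ### Leading monomials -/

open MvPolynomial

noncomputable def mo (N : ℕ) : MonomialOrder (Fin N) := MonomialOrder.lex

variable {N : ℕ}

noncomputable def lmon (p : MvPolynomial (Fin N) ℂ) : Fin N →₀ ℕ :=
  (mo N).toSyn.symm (p.support.sup (mo N).toSyn)

lemma lmon_mem {p : MvPolynomial (Fin N) ℂ} (hp : p ≠ 0) : lmon p ∈ p.support := by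
  obtain ⟨b, hb, he⟩ :=
    Finset.exists_mem_eq_sup p.support (support_nonempty.2 hp) (mo N).toSyn
  rw [lmon, he, AddEquiv.symm_apply_apply]
  exact hb

lemma coeff_lmon {p : MvPolynomial (Fin N) ℂ} (hp : p ≠ 0) : coeff (lmon p) p ≠ 0 :=
  mem_support_iff.1 (lmon_mem hp)

lemma le_lmon {p : MvPolynomial (Fin N) ℂ} {ν : Fin N →₀ ℕ} (hν : ν ∈ p.support) :
    (mo N).toSyn ν ≤ (mo N).toSyn (lmon p) := by
  rw [lmon, AddEquiv.apply_symm_apply]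
  exact Finset.le_sup hν

lemma coeff_eq_zero_of_lmon_lt {p : MvPolynomial (Fin N) ℂ} {ν : Fin N →₀ ℕ}
    (h : (mo N).toSyn (lmon p) < (mo N).toSyn ν) : coeff ν p = 0 := by
  by_contra h0
  exact absurd (le_lmon (mem_support_iff.2 h0)) (not_le.2 h)

lemma lmon_X_mul {p : MvPolynomial (Fin N) ℂ} (hp : p ≠ 0) (k : Fin N) :
    lmon (X k * p) = Finsupp.single k 1 + lmon p := by
  have hXp : X k * p ≠ 0 := mul_ne_zero (X_ne_zero k) hp
  apply (mo N).toSyn.injective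
  apply le_antisymm
  · have hmem := lmon_mem hXp
    rw [support_X_mul] at hmem
    obtain ⟨ν, hν, he⟩ := Finset.mem_map.1 hmem
    have heq : lmon (X k * p) = Finsupp.single k 1 + ν := by rw [← he]; rfl
    rw [heq, map_add, map_add]
    exact add_le_add_right (le_lmon hν) _
  · have hmem : Finsupp.single k 1 + lmon p ∈ (X k * p).support := by
      rw [support_X_mul, Finset.mem_map]
      exact ⟨lmon p, lmon_mem hp, rfl⟩
    exact le_lmon hmem

/-! ### monomials as multisets -/

noncomputable def mon2mult (μ : Fin N →₀ ℕ) : Multiset ℕ := (Finsupp.toMultiset μ).map (Fin.val)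

lemma mon2mult_injective : Function.Injective (mon2mult (N := N)) := by
  intro a b h
  have h1 := Multiset.map_injective (Fin.val_injective) h
  have h2 := congrArg (Multiset.toFinsupp) h1
  rwa [Finsupp.toMultiset_toFinsupp, Finsupp.toMultiset_toFinsupp] at h2

lemma card_mon2mult (μ : Fin N →₀ ℕ) : Multiset.card (mon2mult μ) = μ.degree := by
  rw [mon2mult, Multiset.card_map, Finsupp.card_toMultiset]
  rfl

lemma mem_mon2mult_lt (μ : Fin N →₀ ℕ) : ∀ x ∈ mon2mult μ, x < N := by
  intro x hx
  rw [mon2mult, Multiset.mem_map] at hx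
  obtain ⟨⟨v, hv⟩, _, rfl⟩ := hx
  exact hv

lemma mon2mult_add_single (k : Fin N) (μ : Fin N →₀ ℕ) :
    mon2mult (Finsupp.single k 1 + μ) = (k : ℕ) ::ₘ mon2mult μ := by
  rw [mon2mult, mon2mult, Finsupp.toMultiset_add, Multiset.map_add,
    Finsupp.toMultiset_single, one_nsmul, Multiset.map_singleton, Multiset.singleton_add]

noncomputable def invmon : Multiset ℕ → (Fin N →₀ ℕ) := Function.invFun (mon2mult (N := N))

lemma invmon_mon2mult (μ : Fin N →₀ ℕ) : invmon (mon2mult μ) = μ :=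
  Function.leftInverse_invFun mon2mult_injective μ

/-! ### Graded components of an ideal and their leading monomial sets -/

section IdealPart

open scoped Classical

variable (I : Ideal (MvPolynomial (Fin N) ℂ))

/-- the degree-`e` graded component of `I` as a `ℂ`-submodule -/
noncomputable def Kcomp (e : ℕ) : Submodule ℂ (MvPolynomial (Fin N) ℂ) :=
  (Submodule.restrictScalars ℂ I) ⊓ (homogeneousSubmodule (Fin N) ℂ e)

lemma mem_Kcomp {p : MvPolynomial (Fin N) ℂ} {e : ℕ} :
    p ∈ Kcomp I e ↔ p ∈ I ∧ p.IsHomogeneous e := by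
  rw [Kcomp, Submodule.mem_inf, Submodule.restrictScalars_mem, mem_homogeneousSubmodule]

lemma lmon_degree {p : MvPolynomial (Fin N) ℂ} {e : ℕ} (hp : p ≠ 0)
    (hh : p.IsHomogeneous e) : (lmon p).degree = e := by
  by_contra hne
  exact coeff_lmon hp (hh.coeff_eq_zero hne)

lemma lmon_mem_level {p : MvPolynomial (Fin N) ℂ} {e : ℕ} (hp : p ≠ 0)
    (hh : p.IsHomogeneous e) : mon2mult (lmon p) ∈ level N e :=
  mem_level.2 ⟨by rw [card_mon2mult, lmon_degree hp hh], mem_mon2mult_lt _⟩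

/-- the set of leading monomials of the degree-`e` component of `I` -/
noncomputable def BSet (e : ℕ) : Finset (Multiset ℕ) :=
  (level N e).filter (fun c => ∃ p, p ∈ Kcomp I e ∧ p ≠ 0 ∧ mon2mult (lmon p) = c)

lemma mem_BSet {e : ℕ} {c : Multiset ℕ} :
    c ∈ BSet I e ↔ c ∈ level N e ∧ ∃ p, p ∈ Kcomp I e ∧ p ≠ 0 ∧ mon2mult (lmon p) = c :=
  Finset.mem_filter

lemma BSet_level {e : ℕ} : ∀ c ∈ BSet I e, c ∈ level N e := fun _ hc => ((mem_BSet _).1 hc).1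

lemma BSet_shadow {e : ℕ} : shadow N (BSet I e) ⊆ BSet I (e+1) := by
  intro c' hc'
  have hlev := shadow_level (BSet_level I (e := e)) c' hc'
  obtain ⟨c, hc, k, hkN, rfl⟩ := mem_shadow.1 hc'
  obtain ⟨_, p, hpI, hpne, hpc⟩ := (mem_BSet _).1 hc
  refine (mem_BSet _).2 ⟨hlev, X (⟨k, hkN⟩ : Fin N) * p, ?_, mul_ne_zero (X_ne_zero _) hpne, ?_⟩
  · rw [mem_Kcomp] at hpI ⊢
    refine ⟨Ideal.mul_mem_left I _ hpI.1, ?_⟩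
    have := (isHomogeneous_X ℂ (⟨k, hkN⟩ : Fin N)).mul hpI.2
    rwa [add_comm] at this
  · rw [lmon_X_mul hpne, mon2mult_add_single, hpc]

/-- coefficient extraction, as a linear map -/
noncomputable def coeffMap (e : ℕ) : Kcomp I e →ₗ[ℂ] (↥(BSet I e) → ℂ) :=
  LinearMap.pi (fun c => (lcoeff ℂ (invmon (c : Multiset ℕ))).comp (Kcomp I e).subtype)

lemma coeffMap_injective (e : ℕ) : Function.Injective (coeffMap I e) := by
  rw [← LinearMap.ker_eq_bot, eq_bot_iff]
  rintro v hv
  rw [LinearMap.mem_ker] at hv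
  rw [Submodule.mem_bot]
  by_contra h0
  have hpne : (v : MvPolynomial (Fin N) ℂ) ≠ 0 := fun h => h0 (Subtype.ext h)
  obtain ⟨hvI, hvh⟩ := (mem_Kcomp _).1 v.2
  have hc : mon2mult (lmon (v : MvPolynomial (Fin N) ℂ)) ∈ BSet I e :=
    (mem_BSet _).2 ⟨lmon_mem_level hpne hvh, v, v.2, hpne, rfl⟩
  have hz := congrFun hv ⟨_, hc⟩
  simp only [coeffMap, LinearMap.pi_apply, LinearMap.comp_apply, Submodule.subtype_apply,
    Pi.zero_apply] at hz
  rw [invmon_mon2mult] at hz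
  exact coeff_lmon hpne hz

instance Kcomp_finiteDimensional (e : ℕ) : FiniteDimensional ℂ (Kcomp I e) :=
  FiniteDimensional.of_injective (coeffMap I e) (coeffMap_injective I e)

lemma finrank_Kcomp_le (e : ℕ) :
    Module.finrank ℂ (Kcomp I e) ≤ (BSet I e).card := by
  have h1 := LinearMap.finrank_le_finrank_of_injective (coeffMap_injective I e)
  rwa [Module.finrank_pi, Fintype.card_coe] at h1

lemma card_BSet_le (e : ℕ) :
    (BSet I e).card ≤ Module.finrank ℂ (Kcomp I e) := by
  have hex : ∀ c : ↥(BSet I e),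
      ∃ p : Kcomp I e, (p : MvPolynomial (Fin N) ℂ) ≠ 0 ∧
        mon2mult (lmon (p : MvPolynomial (Fin N) ℂ)) = (c : Multiset ℕ) := by
    rintro ⟨c, hc⟩
    obtain ⟨_, p, hp1, hp2, hp3⟩ := (mem_BSet _).1 hc
    exact ⟨⟨p, hp1⟩, hp2, hp3⟩
  choose f hf1 hf2 using hex
  have hli : LinearIndependent ℂ f := by
    rw [linearIndependent_iff']
    intro s g hsum i hi
    by_contra hgi
    set T := s.filter (fun i => g i ≠ 0) with hT
    have hTne : T.Nonempty := ⟨i, Finset.mem_filter.2 ⟨hi, hgi⟩⟩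
    obtain ⟨i0, hi0T, hmax⟩ := Finset.exists_max_image T
      (fun i => (mo N).toSyn (lmon (f i : MvPolynomial (Fin N) ℂ))) hTne
    obtain ⟨hi0s, hgi0⟩ := Finset.mem_filter.1 hi0T
    set μ := lmon ((f i0 : MvPolynomial (Fin N) ℂ)) with hμ
    have hcoe : (∑ i ∈ s, g i • (f i : MvPolynomial (Fin N) ℂ)) = 0 := by
      have h := congrArg (fun (x : Kcomp I e) => (x : MvPolynomial (Fin N) ℂ)) hsum
      simpa using h
    have hz := congrArg (coeff μ) hcoe
    rw [coeff_sum, coeff_zero] at hz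
    rw [Finset.sum_eq_single i0] at hz
    · rw [coeff_smul] at hz
      have hne0 : coeff μ (f i0 : MvPolynomial (Fin N) ℂ) ≠ 0 := coeff_lmon (hf1 i0)
      rcases mul_eq_zero.1 hz with h | h
      · exact hgi0 h
      · exact hne0 h
    · intro b hb hbne
      rw [coeff_smul]
      by_cases hgb : g b = 0
      · rw [hgb, zero_smul]
      · have hbT : b ∈ T := Finset.mem_filter.2 ⟨hb, hgb⟩
        have hle := hmax b hbT
        have hlt : (mo N).toSyn (lmon (f b : MvPolynomial (Fin N) ℂ)) < (mo N).toSyn μ := by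
          rcases lt_or_eq_of_le hle with h | h
          · exact h
          · exfalso
            have heq := (mo N).toSyn.injective h
            have hmm : (b : Multiset ℕ) = (i0 : Multiset ℕ) := by
              rw [← hf2 b, ← hf2 i0, heq]
            exact hbne (Subtype.ext hmm)
        rw [coeff_eq_zero_of_lmon_lt hlt, smul_zero]
    · intro hi0s'
      exact absurd hi0s hi0s'
  have hcard := hli.fintype_card_le_finrank
  rwa [Fintype.card_coe] at hcard

end IdealPart

end MacAux

/-- The degree-`e` graded component of an ideal `I ⊆ ℂ[x_1,…,x_N]`: the ℂ-span of the
homogeneous degree-`e` elements of `I`. -/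
noncomputable def idealComponent {N : ℕ} (I : Ideal (MvPolynomial (Fin N) ℂ)) (e : ℕ) :
    Submodule ℂ (MvPolynomial (Fin N) ℂ) :=
  Submodule.span ℂ { p | p ∈ I ∧ p.IsHomogeneous e }

lemma MacAux.idealComponent_eq {N : ℕ} (I : Ideal (MvPolynomial (Fin N) ℂ)) (e : ℕ) :
    idealComponent I e = MacAux.Kcomp I e := by
  rw [idealComponent]
  have hset : { p : MvPolynomial (Fin N) ℂ | p ∈ I ∧ p.IsHomogeneous e }
      = ↑(MacAux.Kcomp I e) := by
    ext p
    simp only [Set.mem_setOf_eq, SetLike.mem_coe, MacAux.mem_Kcomp]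
  rw [hset, Submodule.span_eq]

/-- **Corollary of Macaulay's theorem.** If `I ⊆ ℂ[x_1,…,x_N]` is a homogeneous ideal with
`dim I_d ≥ C(N+d−q−1, d−q)` for some `q < d`, then for every `τ ≥ 0`,
`dim I_{d+τ} ≥ C(N+τ+d−q−1, τ+d−q)`. -/
theorem macaulay_corollary (N : ℕ) (I : Ideal (MvPolynomial (Fin N) ℂ))
    (hI : ∀ p ∈ I, ∀ i : ℕ, MvPolynomial.homogeneousComponent i p ∈ I)
    (d q : ℕ) (hqd : q < d)
    (h : Module.finrank ℂ (idealComponent I d) ≥ Nat.choose (N + d - q - 1) (d - q)) :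
    ∀ τ : ℕ,
      Module.finrank ℂ (idealComponent I (d + τ)) ≥
        Nat.choose (N + τ + d - q - 1) (τ + d - q) := by
  intro τ
  have hbase : MacAux.M N (d - q) ≤ (MacAux.BSet I d).card := by
    have h1 : MacAux.M N (d - q) = (N + d - q - 1).choose (d - q) := by
      rw [MacAux.M]; congr 1; omega
    have h2 := MacAux.finrank_Kcomp_le I d
    rw [ge_iff_le, MacAux.idealComponent_eq] at h
    omega
  have hstep : ∀ σ : ℕ, MacAux.M N (d + σ - q) ≤ (MacAux.BSet I (d + σ)).card := by
    intro σ
    induction σ with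
    | zero => simpa using hbase
    | succ σ ih =>
      have hq' : q < d + σ := by omega
      have hcm := MacAux.comb_main N (d + σ) q hq' (MacAux.BSet I (d + σ))
        (MacAux.BSet_level I) ih
      have hsub := Finset.card_le_card (MacAux.BSet_shadow I (e := d + σ))
      have hidx : d + σ - q + 1 = d + σ + 1 - q := by omega
      rw [hidx] at hcm
      show MacAux.M N (d + σ + 1 - q) ≤ (MacAux.BSet I (d + σ + 1)).card
      omega
  have h1 := hstep τ
  have h2 := MacAux.card_BSet_le I (d + τ)
  rw [ge_iff_le, MacAux.idealComponent_eq]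
  have h3 : (N + τ + d - q - 1).choose (τ + d - q) = MacAux.M N (d + τ - q) := by
    rw [MacAux.M]; congr 1 <;> omega
  omega
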